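/- For every integer k ≥ 3, there exists a connected interval graph G with a dominating path (so pe(G) ≤ 1) such that every longest path P of G satisfies ecc_G(P) = k - 1. In particular, longest paths in interval graphs need not be central paths. -/

import Mathlib

open SimpleGraph

variable {V : Type*} [Fintype V] [DecidableEq V]

/-- Distance from a vertex `u` to the vertex set of a walk `P`. -/
noncomputable def walkDist (G : SimpleGraph V) {a b : V} (P : G.Walk a b) (u : V) : ℕ :=
  P.support.toFinset.inf' ⟨a, List.mem_toFinset.mpr P.start_mem_support⟩ (fun x => G.dist u x)

/-- Eccentricity of a walk: max distance from any vertex of `G` to the walk. -/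
noncomputable def eccW (G : SimpleGraph V) {a b : V} (P : G.Walk a b) : ℕ :=
  Finset.univ.sup (walkDist G P)

/-- Path eccentricity of a graph. -/
noncomputable def pe (G : SimpleGraph V) : ℕ :=
  sInf {m | ∃ (a b : V) (P : G.Walk a b), P.IsPath ∧ eccW G P = m}

/-- `P` is a longest path in `G`. -/
def IsLongestPath (G : SimpleGraph V) {a b : V} (P : G.Walk a b) : Prop :=
  P.IsPath ∧ ∀ (c d : V) (Q : G.Walk c d), Q.IsPath → Q.length ≤ P.length

/-- `G` is `k`-connected. -/
def KConnected (k : ℕ) (G : SimpleGraph V) : Prop :=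
  k + 1 ≤ Fintype.card V ∧
    ∀ S : Finset V, S.card < k → (G.induce ((↑S : Set V)ᶜ)).Connected

/-- `G` is an interval graph: vertices can be represented by closed real intervals
so that distinct vertices are adjacent iff their intervals intersect. -/
def IsIntervalGraph {W : Type*} (G : SimpleGraph W) : Prop :=
  ∃ lo hi : W → ℝ, ∀ u v : W,
    G.Adj u v ↔ u ≠ v ∧ (Set.Icc (lo u) (hi u) ∩ Set.Icc (lo v) (hi v)).Nonempty

section Aux

variable {V : Type*}

/-- helper: equal Fin mks -/
lemma finmk_eq {n a b : ℕ} {h : a < n} {h' : b < n} (e : a = b) :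
    (⟨a, h⟩ : Fin n) = ⟨b, h'⟩ := by subst e; rfl

lemma dart_fst_unique {G : SimpleGraph V} {a b : V} {p : G.Walk a b} (hp : p.IsPath)
    {d₁ d₂ : G.Dart} (h₁ : d₁ ∈ p.darts) (h₂ : d₂ ∈ p.darts) (h : d₁.fst = d₂.fst) :
    d₁ = d₂ := by
  have hnd : (p.darts.map (·.fst)).Nodup := by
    rw [SimpleGraph.Walk.map_fst_darts]
    exact List.Nodup.sublist (List.dropLast_sublist _) hp.support_nodup
  exact List.inj_on_of_nodup_map hnd h₁ h₂ h

lemma dart_snd_unique {G : SimpleGraph V} {a b : V} {p : G.Walk a b} (hp : p.IsPath)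
    {d₁ d₂ : G.Dart} (h₁ : d₁ ∈ p.darts) (h₂ : d₂ ∈ p.darts) (h : d₁.snd = d₂.snd) :
    d₁ = d₂ := by
  have hnd : (p.darts.map (·.snd)).Nodup := by
    rw [SimpleGraph.Walk.map_snd_darts]
    exact List.Nodup.sublist (List.tail_sublist _) hp.support_nodup
  exact List.inj_on_of_nodup_map hnd h₁ h₂ h

lemma exists_cross {G : SimpleGraph V} {a b : V} (p : G.Walk a b) (X : Set V)
    [DecidableEq V] {u v : V}
    (hu : u ∈ p.support) (hv : v ∈ p.support) (hXu : u ∈ X) (hXv : v ∉ X) :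
    ∃ d : G.Dart, d ∈ p.darts ∧ ((d.fst ∈ X ∧ d.snd ∉ X) ∨ (d.fst ∉ X ∧ d.snd ∈ X)) := by
  by_cases ha : a ∈ X
  · obtain ⟨d, hd, h1, h2⟩ := (p.takeUntil v hv).exists_boundary_dart X ha hXv
    exact ⟨d, p.darts_takeUntil_subset hv hd, Or.inl ⟨h1, h2⟩⟩
  · obtain ⟨d, hd, h1, h2⟩ := (p.takeUntil u hu).exists_boundary_dart Xᶜ ha
      (by simpa using hXu)
    exact ⟨d, p.darts_takeUntil_subset hu hd, Or.inr ⟨h1, by simpa using h2⟩⟩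

end Aux

section Construction

def adjP (k a b : ℕ) : Prop :=
  (a < 2*k ∧ b < 2*k ∧ (a + 1 = b ∨ b + 1 = a)) ∨ (2*k ≤ a ∧ 2*k ≤ b) ∨
  (a = k ∧ 2*k ≤ b) ∨ (b = k ∧ 2*k ≤ a)

def Gk (k : ℕ) : SimpleGraph (Fin (3*k)) where
  Adj u v := u ≠ v ∧ adjP k u.val v.val
  symm := by
    constructor
    rintro u v ⟨h1, h2⟩
    refine ⟨h1.symm, ?_⟩
    unfold adjP at *; tauto
  loopless := ⟨fun u h => h.1 rfl⟩

lemma Gk_adj {k : ℕ} {u v : Fin (3*k)} :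
    (Gk k).Adj u v ↔ u ≠ v ∧ adjP k u.val v.val := Iff.rfl

lemma Gk_adj' {k : ℕ} {u v : Fin (3*k)} :
    (Gk k).Adj u v ↔ u.val ≠ v.val ∧ adjP k u.val v.val := by
  rw [Gk_adj, ne_eq, Fin.ext_iff]

def upWalk (k a : ℕ) : (m : ℕ) → (hlt : a + m < 3*k) →
    (hseg : ∀ t, a ≤ t → t < a + m → adjP k t (t+1)) →
    (Gk k).Walk ⟨a, by omega⟩ ⟨a + m, hlt⟩
  | 0, _, _ => SimpleGraph.Walk.nil
  | m+1, hlt, hseg =>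
    (upWalk k a m (by omega) (fun t ht ht' => hseg t ht (by omega))).concat
      (Gk_adj.mpr ⟨by simp [Fin.ext_iff], hseg (a+m) (by omega) (by omega)⟩)

lemma upWalk_length (k a : ℕ) : ∀ (m : ℕ) (hlt : a + m < 3*k) (hseg : _),
    (upWalk k a m hlt hseg).length = m
  | 0, _, _ => rfl
  | m+1, hlt, hseg => by
    rw [upWalk, SimpleGraph.Walk.length_concat, upWalk_length]

lemma mem_upWalk_support (k a : ℕ) : ∀ (m : ℕ) (hlt : a + m < 3*k) (hseg : _)
    (v : Fin (3*k)), v ∈ (upWalk k a m hlt hseg).support ↔ a ≤ v.val ∧ v.val ≤ a + m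
  | 0, _, _, v => by
    simp only [upWalk, SimpleGraph.Walk.support_nil, List.mem_singleton, Fin.ext_iff]
    omega
  | m+1, hlt, hseg, v => by
    rw [upWalk, SimpleGraph.Walk.support_concat]
    simp only [List.concat_eq_append, List.mem_append, List.mem_singleton,
      mem_upWalk_support, Fin.ext_iff]
    omega

lemma upWalk_isPath (k a : ℕ) : ∀ (m : ℕ) (hlt : a + m < 3*k) (hseg : _),
    (upWalk k a m hlt hseg).IsPath
  | 0, _, _ => SimpleGraph.Walk.IsPath.nil
  | m+1, hlt, hseg => by
    apply SimpleGraph.Walk.IsPath.mk'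
    rw [upWalk, SimpleGraph.Walk.support_concat]
    simp only [List.concat_eq_append, List.nodup_append, List.nodup_singleton]
    refine ⟨(upWalk_isPath k a m _ _).support_nodup, trivial, ?_⟩
    intro x hx y hx'
    simp only [List.mem_singleton] at hx'
    rw [mem_upWalk_support] at hx
    subst hx'
    intro hxy
    subst hxy
    simp only [Fin.val_mk] at hx
    omega

end Construction


section Count

variable {k : ℕ}

def Tset (k : ℕ) : Finset (Fin (3*k)) :=
  Finset.univ.filter (fun v => v.val ≤ k ∨ 2*k ≤ v.val)

lemma mem_Tset {v : Fin (3*k)} : v ∈ Tset k ↔ v.val ≤ k ∨ 2*k ≤ v.val := by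
  simp [Tset]

lemma card_le_of_high (s : Finset (Fin (3*k))) (h : ∀ v ∈ s, k ≤ v.val) :
    s.card ≤ 2*k := by
  calc s.card = (s.image Fin.val).card :=
        (Finset.card_image_of_injective s Fin.val_injective).symm
    _ ≤ (Finset.Ico k (3*k)).card := by
        apply Finset.card_le_card
        intro x hx
        simp only [Finset.mem_image] at hx
        obtain ⟨v, hv, rfl⟩ := hx
        have := v.isLt
        simp only [Finset.mem_Ico]
        exact ⟨h v hv, this⟩
    _ ≤ 2*k := by rw [Nat.card_Ico]; omega

lemma card_le_of_low (s : Finset (Fin (3*k))) (h : ∀ v ∈ s, v.val < 2*k) :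
    s.card ≤ 2*k := by
  calc s.card = (s.image Fin.val).card :=
        (Finset.card_image_of_injective s Fin.val_injective).symm
    _ ≤ (Finset.range (2*k)).card := by
        apply Finset.card_le_card
        intro x hx
        simp only [Finset.mem_image] at hx
        obtain ⟨v, hv, rfl⟩ := hx
        simp only [Finset.mem_range]
        exact h v hv
    _ = 2*k := Finset.card_range _

lemma Tset_card (hk : 3 ≤ k) : (Tset k).card = 2*k + 1 := by
  have himg : (Tset k).image Fin.val = Finset.range (k+1) ∪ Finset.Ico (2*k) (3*k) := by
    ext x
    simp only [Finset.mem_image, Finset.mem_union, Finset.mem_range, Finset.mem_Ico, mem_Tset]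
    constructor
    · rintro ⟨v, hv, rfl⟩
      have := v.isLt
      omega
    · intro hx
      have hx3 : x < 3*k := by omega
      exact ⟨⟨x, hx3⟩, by simp only [Fin.val_mk]; omega, rfl⟩
  have hcard : (Tset k).card = ((Tset k).image Fin.val).card :=
    (Finset.card_image_of_injective _ Fin.val_injective).symm
  rw [hcard, himg, Finset.card_union_of_disjoint, Finset.card_range, Nat.card_Ico]
  · omega
  · rw [Finset.disjoint_left]
    intro t h1 h2
    simp only [Finset.mem_range, Finset.mem_Ico] at h1 h2
    omega

def fL (k : ℕ) (v : Fin (3*k)) : ℕ :=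
  if v.val ≤ k then 0 else if v.val < 2*k then v.val - k else 0

lemma fL_adj {u v : Fin (3*k)} (h : (Gk k).Adj u v) : fL k u ≤ fL k v + 1 := by
  rw [Gk_adj'] at h
  obtain ⟨-, h⟩ := h
  unfold adjP at h
  unfold fL
  split_ifs <;> omega

lemma fL_walk {u v : Fin (3*k)} (p : (Gk k).Walk u v) : fL k u ≤ fL k v + p.length := by
  induction p with
  | nil => simp
  | cons h q ih =>
    have := fL_adj h
    rw [SimpleGraph.Walk.length_cons]
    omega

lemma Gk_connected (hk : 3 ≤ k) : (Gk k).Connected := by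
  have hmk : k < 3*k := by omega
  have hreach : ∀ v : Fin (3*k), (Gk k).Reachable v ⟨k, hmk⟩ := by
    intro v
    rcases lt_or_ge v.val (2*k) with hv | hv
    · rcases le_or_gt v.val k with h1 | h1
      · have hseg : ∀ t, v.val ≤ t → t < v.val + (k - v.val) → adjP k t (t+1) := by
          intro t ht ht'; unfold adjP; omega
        have w := upWalk k v.val (k - v.val) (by omega) hseg
        exact ⟨w.copy (Fin.ext rfl) (Fin.ext (by simp only [Fin.val_mk]; omega))⟩
      · have hseg : ∀ t, k ≤ t → t < k + (v.val - k) → adjP k t (t+1) := by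
          intro t ht ht'; unfold adjP; omega
        have w := upWalk k k (v.val - k) (by omega) hseg
        exact ⟨(w.copy rfl (Fin.ext (by simp only [Fin.val_mk]; omega))).reverse⟩
    · have hadj : (Gk k).Adj v ⟨k, hmk⟩ := by
        rw [Gk_adj']
        simp only [Fin.val_mk]
        unfold adjP
        omega
      exact hadj.reachable
  have : Nonempty (Fin (3*k)) := ⟨⟨0, by omega⟩⟩
  exact ⟨fun u v => (hreach u).trans (hreach v).symm⟩

lemma dist_to_k (hk : 3 ≤ k) {u : Fin (3*k)} (h1 : k ≤ u.val) (h2 : u.val < 2*k) :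
    (Gk k).dist u ⟨k, by omega⟩ ≤ u.val - k := by
  have hseg : ∀ t, k ≤ t → t < k + (u.val - k) → adjP k t (t+1) := by
    intro t ht ht'; unfold adjP; omega
  have hw := SimpleGraph.dist_le (((upWalk k k (u.val - k) (by omega) hseg).copy rfl
      (Fin.ext (by simp only [Fin.val_mk]; omega)) : (Gk k).Walk ⟨k, by omega⟩ u).reverse)
  rw [SimpleGraph.Walk.length_reverse, SimpleGraph.Walk.length_copy, upWalk_length] at hw
  exact hw

lemma dist_lower (hk : 3 ≤ k) (x y : Fin (3*k)) :
    fL k x ≤ fL k y + (Gk k).dist x y := by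
  obtain ⟨p, hp⟩ := ((Gk_connected hk).preconnected x y).exists_walk_length_eq_dist
  have := fL_walk p
  omega

end Count


section Main

variable {k : ℕ}

lemma no_chain_of_big (hk : 3 ≤ k) {a b : Fin (3*k)} {P : (Gk k).Walk a b} (hP : P.IsPath)
    (hbig : 2*k + 1 ≤ P.support.toFinset.card) :
    ∀ v ∈ P.support, v.val ≤ k ∨ 2*k ≤ v.val := by
  by_contra hcon
  push_neg at hcon
  obtain ⟨c, hc, hc1, hc2⟩ := hcon
  have hlow : ∃ u ∈ P.support, u.val < k := by
    by_contra h
    push_neg at h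
    have := card_le_of_high P.support.toFinset (fun v hv => h v (List.mem_toFinset.mp hv))
    omega
  have hstar : ∃ w ∈ P.support, 2*k ≤ w.val := by
    by_contra h
    push_neg at h
    have := card_le_of_low P.support.toFinset (fun v hv => h v (List.mem_toFinset.mp hv))
    omega
  obtain ⟨u, hu, hu1⟩ := hlow
  obtain ⟨w, hw, hw1⟩ := hstar
  obtain ⟨D1, hD1, hX1⟩ := exists_cross P {x | x.val < k} hu hc hu1
    (by simp only [Set.mem_setOf_eq]; omega)
  obtain ⟨D2, hD2, hX2⟩ := exists_cross P {x | k+1 ≤ x.val ∧ x.val < 2*k} hc hu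
    (by simp only [Set.mem_setOf_eq]; omega) (by simp only [Set.mem_setOf_eq]; omega)
  obtain ⟨D3, hD3, hX3⟩ := exists_cross P {x | 2*k ≤ x.val} hw hu hw1
    (by simp only [Set.mem_setOf_eq]; omega)
  simp only [Set.mem_setOf_eq] at hX1 hX2 hX3
  have A1 := D1.adj; have A2 := D2.adj; have A3 := D3.adj
  rw [Gk_adj'] at A1 A2 A3
  have h1 : (D1.fst.val = k ∨ D1.snd.val = k) ∧ D1.fst.val + D1.snd.val + 1 = 2*k := by
    obtain ⟨-, h⟩ := A1; unfold adjP at h; omega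
  have h2 : (D2.fst.val = k ∨ D2.snd.val = k) ∧ D2.fst.val + D2.snd.val = 2*k + 1 := by
    obtain ⟨-, h⟩ := A2; unfold adjP at h; omega
  have h3 : (D3.fst.val = k ∨ D3.snd.val = k) ∧ 3*k ≤ D3.fst.val + D3.snd.val := by
    obtain ⟨-, h⟩ := A3; unfold adjP at h; omega
  have uniq : ∀ {D D' : (Gk k).Dart}, D ∈ P.darts → D' ∈ P.darts →
      (D.fst.val = k ∧ D'.fst.val = k) ∨ (D.snd.val = k ∧ D'.snd.val = k) → D = D' := by
    rintro D D' hD hD' (⟨e1, e2⟩ | ⟨e1, e2⟩)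
    · exact dart_fst_unique hP hD hD' (Fin.ext (e1.trans e2.symm))
    · exact dart_snd_unique hP hD hD' (Fin.ext (e1.trans e2.symm))
  obtain ⟨k1, s1⟩ := h1; obtain ⟨k2, s2⟩ := h2; obtain ⟨k3, s3⟩ := h3
  rcases k1 with k1 | k1 <;> rcases k2 with k2 | k2 <;> rcases k3 with k3 | k3
  · have e := uniq hD1 hD2 (Or.inl ⟨k1, k2⟩); rw [e] at s1; omega
  · have e := uniq hD1 hD2 (Or.inl ⟨k1, k2⟩); rw [e] at s1; omega
  · have e := uniq hD1 hD3 (Or.inl ⟨k1, k3⟩); rw [e] at s1; omega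
  · have e := uniq hD2 hD3 (Or.inr ⟨k2, k3⟩); rw [e] at s2; omega
  · have e := uniq hD2 hD3 (Or.inl ⟨k2, k3⟩); rw [e] at s2; omega
  · have e := uniq hD1 hD3 (Or.inr ⟨k1, k3⟩); rw [e] at s1; omega
  · have e := uniq hD1 hD2 (Or.inr ⟨k1, k2⟩); rw [e] at s1; omega
  · have e := uniq hD1 hD2 (Or.inr ⟨k1, k2⟩); rw [e] at s1; omega

lemma exists_long_path (hk : 3 ≤ k) :
    ∃ (x y : Fin (3*k)) (P : (Gk k).Walk x y), P.IsPath ∧ P.length = 2*k := by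
  have h1 : 0 + k < 3*k := by omega
  have hseg1 : ∀ t, 0 ≤ t → t < 0 + k → adjP k t (t+1) := by
    intro t _ ht; unfold adjP; omega
  have h2 : 2*k + (k-1) < 3*k := by omega
  have hseg2 : ∀ t, 2*k ≤ t → t < 2*k + (k-1) → adjP k t (t+1) := by
    intro t ht ht'; unfold adjP; omega
  have hadj : (Gk k).Adj ⟨k, by omega⟩ ⟨2*k, by omega⟩ := by
    rw [Gk_adj']; simp only [Fin.val_mk]; unfold adjP; omega
  have W1 : (Gk k).Walk ⟨0, by omega⟩ ⟨k, by omega⟩ :=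
    (upWalk k 0 k h1 hseg1).copy rfl (Fin.ext (by simp only [Fin.val_mk]; omega))
  refine ⟨_, _, ((upWalk k 0 k h1 hseg1).copy rfl
      (Fin.ext (by simp only [Fin.val_mk]; omega) :
        (⟨0 + k, h1⟩ : Fin (3*k)) = ⟨k, by omega⟩)).append
      (SimpleGraph.Walk.cons hadj (upWalk k (2*k) (k-1) h2 hseg2)), ?_, ?_⟩
  · apply SimpleGraph.Walk.IsPath.mk'
    rw [SimpleGraph.Walk.support_append, SimpleGraph.Walk.support_copy,
      SimpleGraph.Walk.support_cons]
    rw [List.nodup_append]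
    refine ⟨(upWalk_isPath k 0 k h1 hseg1).support_nodup, ?_, ?_⟩
    · simp only [List.tail_cons]
      exact (upWalk_isPath k (2*k) (k-1) h2 hseg2).support_nodup
    · intro x hx y hx'
      simp only [List.tail_cons] at hx'
      rw [mem_upWalk_support] at hx hx'
      intro hxy
      subst hxy
      omega
  · rw [SimpleGraph.Walk.length_append, SimpleGraph.Walk.length_copy,
      SimpleGraph.Walk.length_cons, upWalk_length, upWalk_length]
    omega

lemma dom_walk (hk : 3 ≤ k) :
    ∃ (x y : Fin (3*k)) (P : (Gk k).Walk x y), P.IsPath ∧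
      ∀ u, walkDist (Gk k) P u ≤ 1 := by
  have h1 : 0 + (2*k - 1) < 3*k := by omega
  have hseg : ∀ t, 0 ≤ t → t < 0 + (2*k-1) → adjP k t (t+1) := by
    intro t _ ht; unfold adjP; omega
  refine ⟨_, _, upWalk k 0 (2*k-1) h1 hseg, upWalk_isPath k 0 (2*k-1) h1 hseg, ?_⟩
  intro u
  unfold walkDist
  rcases lt_or_ge u.val (2*k) with hu | hu
  · have hmem : u ∈ (upWalk k 0 (2*k-1) h1 hseg).support := by
      rw [mem_upWalk_support]; omega
    have hle := Finset.inf'_le (fun x => (Gk k).dist u x) (List.mem_toFinset.mpr hmem)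
    have h0 : (Gk k).dist u u = 0 := SimpleGraph.dist_self
    exact le_trans hle (by rw [h0]; omega)
  · have hmem : (⟨k, by omega⟩ : Fin (3*k)) ∈ (upWalk k 0 (2*k-1) h1 hseg).support := by
      rw [mem_upWalk_support]; simp only [Fin.val_mk]; omega
    have hle := Finset.inf'_le (fun x => (Gk k).dist u x) (List.mem_toFinset.mpr hmem)
    have hadj : (Gk k).Adj u ⟨k, by omega⟩ := by
      rw [Gk_adj']; simp only [Fin.val_mk]; unfold adjP; omega
    have hd : (Gk k).dist u ⟨k, by omega⟩ ≤ 1 := by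
      have := SimpleGraph.dist_le (SimpleGraph.Walk.cons hadj SimpleGraph.Walk.nil)
      simpa using this
    exact le_trans hle hd

lemma longest_structure (hk : 3 ≤ k) {a b : Fin (3*k)} {P : (Gk k).Walk a b}
    (hP : P.IsPath) (hlen : 2*k ≤ P.length) :
    P.length = 2*k ∧ P.support.toFinset = Tset k := by
  have hcard : P.support.toFinset.card = P.length + 1 := by
    rw [List.toFinset_card_of_nodup hP.support_nodup, SimpleGraph.Walk.length_support]
  have hnochain := no_chain_of_big hk hP (by omega)
  have hsub : P.support.toFinset ⊆ Tset k := by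
    intro v hv
    rw [mem_Tset]
    exact hnochain v (List.mem_toFinset.mp hv)
  have hT := Tset_card (k := k) hk
  have hle : P.support.toFinset.card ≤ 2*k+1 := hT ▸ Finset.card_le_card hsub
  exact ⟨by omega, Finset.eq_of_subset_of_card_le hsub (by omega)⟩

lemma eccW_longest (hk : 3 ≤ k) {a b : Fin (3*k)} {P : (Gk k).Walk a b}
    (hP : P.IsPath) (hlen : 2*k ≤ P.length) :
    eccW (Gk k) P = k - 1 := by
  obtain ⟨-, hsupp⟩ := longest_structure hk hP hlen
  have hkmem : (⟨k, by omega⟩ : Fin (3*k)) ∈ P.support.toFinset := by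
    rw [hsupp, mem_Tset]; simp only [Fin.val_mk]; omega
  apply le_antisymm
  · apply Finset.sup_le
    intro u _
    unfold walkDist
    rcases (by omega : u.val ≤ k ∨ 2*k ≤ u.val ∨ (k < u.val ∧ u.val < 2*k)) with hu | hu | hu
    · have humem : u ∈ P.support.toFinset := by rw [hsupp, mem_Tset]; omega
      have hle := Finset.inf'_le (fun x => (Gk k).dist u x) humem
      have h0 : (Gk k).dist u u = 0 := SimpleGraph.dist_self
      exact le_trans hle (by rw [h0]; omega)
    · have humem : u ∈ P.support.toFinset := by rw [hsupp, mem_Tset]; omega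
      have hle := Finset.inf'_le (fun x => (Gk k).dist u x) humem
      have h0 : (Gk k).dist u u = 0 := SimpleGraph.dist_self
      exact le_trans hle (by rw [h0]; omega)
    · have hle := Finset.inf'_le (fun x => (Gk k).dist u x) hkmem
      have hd := dist_to_k hk (u := u) (by omega) (by omega)
      exact le_trans hle (le_trans hd (by omega))
  · refine le_trans ?_ (Finset.le_sup (Finset.mem_univ (⟨2*k-1, by omega⟩ : Fin (3*k))))
    unfold walkDist
    apply Finset.le_inf'
    intro x hx
    have hxT : x ∈ Tset k := hsupp ▸ hx
    rw [mem_Tset] at hxT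
    have hd := dist_lower hk (⟨2*k-1, by omega⟩ : Fin (3*k)) x
    have hfx : fL k x = 0 := by unfold fL; split_ifs <;> omega
    have hfu : fL k (⟨2*k-1, by omega⟩ : Fin (3*k)) = k - 1 := by
      unfold fL; simp only [Fin.val_mk]; split_ifs <;> omega
    omega

end Main


theorem stmt13 (k : ℕ) (hk : 3 ≤ k) :
    ∃ (n : ℕ) (G : SimpleGraph (Fin n)),
      IsIntervalGraph G ∧ G.Connected ∧
      (∃ (a b : Fin n) (P : G.Walk a b), P.IsPath ∧ ∀ u, walkDist G P u ≤ 1) ∧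
      pe G ≤ 1 ∧
      ∀ (a b : Fin n) (P : G.Walk a b), IsLongestPath G P → eccW G P = k - 1 := by
  refine ⟨3*k, Gk k, ?_, Gk_connected hk, dom_walk hk, ?_, ?_⟩
  · -- interval graph
    refine ⟨fun v => ((if v.val < 2*k then 2*v.val else 2*k+1 : ℕ) : ℝ),
            fun v => ((if v.val < 2*k then 2*v.val + 2 else 2*k+1 : ℕ) : ℝ), ?_⟩
    intro u v
    rw [Gk_adj, Set.Icc_inter_Icc, Set.nonempty_Icc,
      ← Nat.cast_max, ← Nat.cast_min, Nat.cast_le]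
    constructor
    · rintro ⟨hne, h⟩
      refine ⟨hne, ?_⟩
      have hne' : u.val ≠ v.val := fun e => hne (Fin.ext e)
      unfold adjP at h
      split_ifs <;> omega
    · rintro ⟨hne, h⟩
      refine ⟨hne, ?_⟩
      have hne' : u.val ≠ v.val := fun e => hne (Fin.ext e)
      have hu := u.isLt
      have hv := v.isLt
      unfold adjP
      split_ifs at h <;> omega
  · -- pe ≤ 1
    obtain ⟨x, y, W, hW, hdom⟩ := dom_walk hk
    have hmem : eccW (Gk k) W ∈
        {m | ∃ (a b : Fin (3*k)) (P : (Gk k).Walk a b), P.IsPath ∧ eccW (Gk k) P = m} :=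
      ⟨x, y, W, hW, rfl⟩
    have h1 : pe (Gk k) ≤ eccW (Gk k) W := Nat.sInf_le hmem
    have h2 : eccW (Gk k) W ≤ 1 := Finset.sup_le (fun u _ => hdom u)
    omega
  · intro a b P hlp
    obtain ⟨x, y, Q, hQ, hQlen⟩ := exists_long_path hk
    exact eccW_longest hk hlp.1 (hQlen ▸ hlp.2 x y Q hQ)
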